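/- Let C̃ be obtained from a CSS code C by the full X-type generator splitting procedure, and let ε > 0. If C is ε-Z-sound, then C̃ is ε′-Z-sound with ε′ = ε/(1 + w_X·(ε + q_X)). -/

import Mathlib

open Matrix

/-- The weight of a vector over `F₂`: the number of nonzero entries. -/
def wt {α : Type*} [Fintype α] (v : α → ZMod 2) : ℕ :=
  (Finset.univ.filter fun j => v j ≠ 0).card

/-- Maximum weight of a row of a matrix over `F₂`. -/
def maxRowW {m α : Type*} [Fintype m] [Fintype α] (M : Matrix m α (ZMod 2)) : ℕ :=
  Finset.univ.sup fun i => wt (M i)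

/-- Maximum weight of a column of a matrix over `F₂`. -/
def maxColW {m α : Type*} [Fintype m] [Fintype α] (M : Matrix m α (ZMod 2)) : ℕ :=
  Finset.univ.sup fun j => wt fun i => M i j

/-- Total number of nonzero entries of a matrix over `F₂`. -/
def totW {m α : Type*} [Fintype m] [Fintype α] (M : Matrix m α (ZMod 2)) : ℕ :=
  ∑ i, wt (M i)

variable {N nX nZ : ℕ}

/-- Qubits of the code obtained by the full X-type generator splitting procedure:
the original `N` qubits, plus, for each row of `HX` of weight `w ≥ 4` (a "heavy" row),
cut qubits `(1),…,(w−3)` (0-indexed below). -/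
abbrev SplitQ (HX : Matrix (Fin nX) (Fin N) (ZMod 2)) : Type :=
  Fin N ⊕ Σ i : {i : Fin nX // 4 ≤ wt (HX i)}, Fin (wt (HX i.1) - 3)

/-- X-type generators of the fully split code: the rows of `HX` of weight `≤ 3`,
plus, for each heavy row, the `w−2` rows created by splitting it. -/
abbrev SplitXIdx (HX : Matrix (Fin nX) (Fin N) (ZMod 2)) : Type :=
  {i : Fin nX // ¬ 4 ≤ wt (HX i)} ⊕ Σ i : {i : Fin nX // 4 ≤ wt (HX i)}, Fin (wt (HX i.1) - 2)

/-- X-type generator matrix of the code `C̃` obtained from `C` by applying the X-type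
generator splitting step once to each row of `HX` of weight at least 4 (the result is the
same in any order).  Here `q i` enumerates, in a fixed order, the support of the heavy
row `i`.  Splitting a heavy row with support `{q₁,…,q_w}` produces `w−2` rows with
supports `{q₁,q₂,(1)}`, `{(m),q_{m+2},(m+1)}` for `m = 1,…,w−4`, and `{(w−3),q_{w−1},q_w}`,
on the original qubits together with that row's own cut qubits. -/
def splitHX (HX : Matrix (Fin nX) (Fin N) (ZMod 2))
    (q : ∀ i : {i : Fin nX // 4 ≤ wt (HX i)}, Fin (wt (HX i.1)) → Fin N) :
    Matrix (SplitXIdx HX) (SplitQ HX) (ZMod 2) := fun r j =>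
  match r, j with
  | Sum.inl i, Sum.inl p => HX i.1 p
  | Sum.inl _, Sum.inr _ => 0
  | Sum.inr ⟨i, r⟩, Sum.inl p =>
      have hw : 4 ≤ wt (HX i.1) := i.2
      if (r.val = 0 ∧ (p = q i ⟨0, by omega⟩ ∨ p = q i ⟨1, by omega⟩)) ∨
         (1 ≤ r.val ∧ r.val ≤ wt (HX i.1) - 4 ∧
           p = q i ⟨r.val + 1, by have := r.isLt; omega⟩) ∨
         (r.val = wt (HX i.1) - 3 ∧
           (p = q i ⟨wt (HX i.1) - 2, by omega⟩ ∨ p = q i ⟨wt (HX i.1) - 1, by omega⟩))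
      then 1 else 0
  | Sum.inr ⟨i, r⟩, Sum.inr ⟨i', c⟩ =>
      if i' = i ∧ (c.val = r.val ∨ c.val + 1 = r.val) then 1 else 0

/-- Z-type generator matrix of the code `C̃` obtained from `C` by the full X-type generator
splitting procedure: each row `R` of `HZ` agrees with `R` on the original qubits, and its
entry at the cut qubit `(m)` of heavy row `i` is the parity of
`|supp(R) ∩ {q_{i,1},…,q_{i,m+1}}|`. -/
def splitHZ (HX : Matrix (Fin nX) (Fin N) (ZMod 2)) (HZ : Matrix (Fin nZ) (Fin N) (ZMod 2))
    (q : ∀ i : {i : Fin nX // 4 ≤ wt (HX i)}, Fin (wt (HX i.1)) → Fin N) :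
    Matrix (Fin nZ) (SplitQ HX) (ZMod 2) := fun R j =>
  match j with
  | Sum.inl p => HZ R p
  | Sum.inr ⟨i, m⟩ => ∑ a : Fin (wt (HX i.1)), if a.val ≤ m.val + 1 then HZ R (q i a) else 0

/-- A CSS code (given by its X-type generator matrix `HX`) is `ε`-Z-sound if for every
`v` with `H_X·v ≠ 0` there exists `u ∈ ker(H_X)` with `wt(H_X·v) ≥ ε·wt(v+u)`. -/
def ZSound {m α : Type*} [Fintype m] [Fintype α] (ε : ℝ) (HX : Matrix m α (ZMod 2)) : Prop :=
  ∀ v : α → ZMod 2, HX.mulVec v ≠ 0 →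
    ∃ u : α → ZMod 2, HX.mulVec u = 0 ∧ ε * (wt (v + u) : ℝ) ≤ (wt (HX.mulVec v) : ℝ)



lemma wt_eq_sum {α : Type*} [Fintype α] (v : α → ZMod 2) :
    wt v = ∑ j, if v j ≠ 0 then 1 else 0 := Finset.card_filter _ _

lemma wt_sumtype {α β : Type*} [Fintype α] [Fintype β] (x : α ⊕ β → ZMod 2) :
    wt x = wt (fun a => x (Sum.inl a)) + wt (fun b => x (Sum.inr b)) := by
  simp [wt_eq_sum, Fintype.sum_sum_type]

lemma wt_sigma {ι : Type*} [Fintype ι] {γ : ι → Type*} [∀ i, Fintype (γ i)]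
    (x : (Σ i, γ i) → ZMod 2) : wt x = ∑ i, wt (fun c => x ⟨i, c⟩) := by
  rw [wt_eq_sum]
  rw [show (Finset.univ : Finset (Σ i, γ i)) = Finset.univ.sigma fun _ => Finset.univ by
    simp [Finset.ext_iff]]
  rw [Finset.sum_sigma]
  simp [wt_eq_sum]

lemma wt_le_card {α : Type*} [Fintype α] (x : α → ZMod 2) : wt x ≤ Fintype.card α :=
  Finset.card_filter_le _ _

lemma one_le_wt {α : Type*} [Fintype α] {x : α → ZMod 2} {j : α} (h : x j ≠ 0) : 1 ≤ wt x :=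
  Finset.card_pos.2 ⟨j, Finset.mem_filter.2 ⟨Finset.mem_univ _, h⟩⟩

lemma wt_eq_zero {α : Type*} [Fintype α] {x : α → ZMod 2} (h : ∀ j, x j = 0) : wt x = 0 := by
  rw [wt, Finset.filter_eq_empty_iff.2 (by intro j _; simpa using h j), Finset.card_empty]

lemma sum_ite_eq_or {α M : Type*} [Fintype α] [DecidableEq α] [AddCommMonoid M]
    {a b : α} (hab : a ≠ b) (f : α → M) :
    ∑ p, (if p = a ∨ p = b then f p else 0) = f a + f b := by
  have : ∀ p, (if p = a ∨ p = b then f p else 0)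
      = (if p = a then f p else 0) + (if p = b then f p else 0) := by
    intro p
    by_cases h1 : p = a <;> by_cases h2 : p = b <;> simp_all
  rw [Finset.sum_congr rfl (fun p _ => this p), Finset.sum_add_distrib]
  simp [Finset.sum_ite_eq' Finset.univ]

lemma sum_ite_val_eq {n : ℕ} {M : Type*} [AddCommMonoid M] (m : ℕ) (hm : m < n)
    (f : Fin n → M) : ∑ c : Fin n, (if c.val = m then f c else 0) = f ⟨m, hm⟩ := by
  rw [show f ⟨m, hm⟩ = if (⟨m, hm⟩ : Fin n) ∈ Finset.univ then f ⟨m, hm⟩ else 0 by simp,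
    ← Finset.sum_ite_eq' Finset.univ (⟨m, hm⟩ : Fin n) f]
  exact Finset.sum_congr rfl fun c _ => by simp [Fin.ext_iff]

lemma sum_ite_val_or {n : ℕ} {M : Type*} [AddCommMonoid M] (m k : ℕ) (hm : m < n) (hk : k < n)
    (hne : m ≠ k) (f : Fin n → M) :
    ∑ c : Fin n, (if c.val = m ∨ c.val = k then f c else 0) = f ⟨m, hm⟩ + f ⟨k, hk⟩ := by
  have : ∀ c : Fin n, (if c.val = m ∨ c.val = k then f c else 0)
      = (if c.val = m then f c else 0) + (if c.val = k then f c else 0) := by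
    intro c
    by_cases h1 : c.val = m <;> by_cases h2 : c.val = k <;> simp_all <;> omega
  rw [Finset.sum_congr rfl (fun c _ => this c), Finset.sum_add_distrib,
    sum_ite_val_eq m hm, sum_ite_val_eq k hk]

def pref {n : ℕ} {M : Type*} [AddCommMonoid M] (f : Fin n → M) (m : ℕ) : M :=
  ∑ a, if a.val ≤ m then f a else 0

lemma fin_val_congr {n : ℕ} {M : Type*} (f : Fin n → M) {a b : ℕ} (ha : a < n) (hb : b < n)
    (h : a = b) : f ⟨a, ha⟩ = f ⟨b, hb⟩ := by subst h; rfl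

lemma pref_zero {n : ℕ} {M : Type*} [AddCommMonoid M] (f : Fin n → M) (hn : 0 < n) :
    pref f 0 = f ⟨0, hn⟩ := by
  rw [pref]
  rw [← sum_ite_val_eq 0 hn f]
  exact Finset.sum_congr rfl fun a _ => by simp [Nat.le_zero]

lemma pref_succ {n : ℕ} {M : Type*} [AddCommMonoid M] (f : Fin n → M) (m : ℕ) (hm : m + 1 < n) :
    pref f (m + 1) = pref f m + f ⟨m + 1, hm⟩ := by
  rw [pref, pref]
  rw [← sum_ite_val_eq (m+1) hm f, ← Finset.sum_add_distrib]
  refine Finset.sum_congr rfl fun a _ => ?_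
  by_cases h1 : a.val ≤ m <;> by_cases h2 : a.val = m + 1 <;>
    first
      | (rw [if_pos (by omega), if_pos h1, if_pos h2]; omega)
      | (rw [if_pos (by omega), if_pos h1, if_neg h2, add_zero])
      | (rw [if_pos (by omega), if_neg h1, if_pos h2, zero_add])
      | (rw [if_neg (by omega), if_neg h1, if_neg h2, add_zero])

lemma pref_top {n : ℕ} {M : Type*} [AddCommMonoid M] (f : Fin n → M) (m : ℕ) (hm : n ≤ m + 1) :
    pref f m = ∑ a, f a :=
  Finset.sum_congr rfl fun a _ => by have := a.isLt; rw [if_pos (by omega)]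


section rows

variable (HX : Matrix (Fin nX) (Fin N) (ZMod 2))
variable (q : ∀ i : {i : Fin nX // 4 ≤ wt (HX i)}, Fin (wt (HX i.1)) → Fin N)

lemma mulVec_split (x : SplitQ HX → ZMod 2) (j : SplitXIdx HX) :
    (splitHX HX q).mulVec x j
      = (∑ p : Fin N, splitHX HX q j (Sum.inl p) * x (Sum.inl p))
        + ∑ i : {i : Fin nX // 4 ≤ wt (HX i)}, ∑ c : Fin (wt (HX i.1) - 3),
            splitHX HX q j (Sum.inr ⟨i, c⟩) * x (Sum.inr ⟨i, c⟩) := by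
  rw [Matrix.mulVec, dotProduct, Fintype.sum_sum_type]
  congr 1
  rw [show (Finset.univ : Finset (Σ i : {i : Fin nX // 4 ≤ wt (HX i)}, Fin (wt (HX i.1) - 3)))
      = Finset.univ.sigma fun _ => Finset.univ by simp [Finset.ext_iff]]
  rw [Finset.sum_sigma]

lemma mulVec_light (x : SplitQ HX → ZMod 2) (i : {i : Fin nX // ¬ 4 ≤ wt (HX i)}) :
    (splitHX HX q).mulVec x (Sum.inl i) = HX.mulVec (fun p => x (Sum.inl p)) i.1 := by
  rw [mulVec_split]
  simp [splitHX, Matrix.mulVec, dotProduct]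

lemma cut_sum (x : SplitQ HX → ZMod 2) (i : {i : Fin nX // 4 ≤ wt (HX i)})
    (r0 : ℕ) :
    (∑ i' : {i : Fin nX // 4 ≤ wt (HX i)}, ∑ c : Fin (wt (HX i'.1) - 3),
        (if i' = i ∧ (c.val = r0 ∨ c.val + 1 = r0) then (1 : ZMod 2) else 0)
          * x (Sum.inr ⟨i', c⟩))
      = ∑ c : Fin (wt (HX i.1) - 3),
          (if c.val = r0 ∨ c.val + 1 = r0 then x (Sum.inr ⟨i, c⟩) else 0) := by
  rw [Finset.sum_eq_single i]
  · exact Finset.sum_congr rfl fun c _ => by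
      by_cases h : c.val = r0 ∨ c.val + 1 = r0
      · rw [if_pos ⟨rfl, h⟩, if_pos h, one_mul]
      · rw [if_neg (fun hc => h hc.2), if_neg h, zero_mul]
  · intro b _ hb
    exact Finset.sum_eq_zero fun c _ => by rw [if_neg (fun hc => hb hc.1), zero_mul]
  · exact fun h => absurd (Finset.mem_univ i) h

lemma row_first (hinj : ∀ i, Function.Injective (q i)) (x : SplitQ HX → ZMod 2)
    (i : {i : Fin nX // 4 ≤ wt (HX i)}) (r : Fin (wt (HX i.1) - 2)) (h0 : r.val = 0) :
    (splitHX HX q).mulVec x (Sum.inr ⟨i, r⟩)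
      = x (Sum.inl (q i ⟨0, by have := i.2; omega⟩))
        + x (Sum.inl (q i ⟨1, by have := i.2; omega⟩))
        + x (Sum.inr ⟨i, ⟨0, by have := i.2; omega⟩⟩) := by
  have hw : 4 ≤ wt (HX i.1) := i.2
  rw [mulVec_split]
  simp only [splitHX]
  rw [cut_sum]
  have e1 : (∑ p : Fin N, (if (r.val = 0 ∧ (p = q i ⟨0, by omega⟩ ∨ p = q i ⟨1, by omega⟩)) ∨
         (1 ≤ r.val ∧ r.val ≤ wt (HX i.1) - 4 ∧
           p = q i ⟨r.val + 1, by have := r.isLt; omega⟩) ∨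
         (r.val = wt (HX i.1) - 3 ∧
           (p = q i ⟨wt (HX i.1) - 2, by omega⟩ ∨ p = q i ⟨wt (HX i.1) - 1, by omega⟩))
      then (1 : ZMod 2) else 0) * x (Sum.inl p))
      = ∑ p : Fin N, (if p = q i ⟨0, by omega⟩ ∨ p = q i ⟨1, by omega⟩
          then x (Sum.inl p) else 0) := by
    refine Finset.sum_congr rfl fun p _ => ?_
    by_cases h2 : p = q i ⟨0, by omega⟩ ∨ p = q i ⟨1, by omega⟩
    · rw [if_pos (Or.inl ⟨h0, h2⟩), if_pos h2, one_mul]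
    · rw [if_neg ?_, if_neg h2, zero_mul]
      rintro (⟨_, hp⟩ | ⟨h1, _⟩ | ⟨h1, _⟩)
      · exact h2 hp
      · omega
      · omega
  rw [e1, sum_ite_eq_or (fun h => by
        have := hinj i h; rw [Fin.ext_iff] at this; simp at this)]
  have e2 : (∑ c : Fin (wt (HX i.1) - 3),
        (if c.val = r.val ∨ c.val + 1 = r.val then x (Sum.inr ⟨i, c⟩) else 0))
      = x (Sum.inr ⟨i, ⟨0, by omega⟩⟩) := by
    rw [← sum_ite_val_eq 0 (show 0 < wt (HX i.1) - 3 by omega) (fun c => x (Sum.inr ⟨i, c⟩))]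
    exact Finset.sum_congr rfl fun c _ => by
      by_cases h : c.val = 0
      · rw [if_pos (by omega), if_pos h]
      · rw [if_neg (by omega), if_neg h]
  rw [e2]

lemma row_mid (x : SplitQ HX → ZMod 2)
    (i : {i : Fin nX // 4 ≤ wt (HX i)}) (r : Fin (wt (HX i.1) - 2))
    (h1 : 1 ≤ r.val) (h2 : r.val ≤ wt (HX i.1) - 4) :
    (splitHX HX q).mulVec x (Sum.inr ⟨i, r⟩)
      = x (Sum.inl (q i ⟨r.val + 1, by have := i.2; have := r.isLt; omega⟩))
        + x (Sum.inr ⟨i, ⟨r.val - 1, by have := i.2; omega⟩⟩)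
        + x (Sum.inr ⟨i, ⟨r.val, by have := i.2; omega⟩⟩) := by
  have hw : 4 ≤ wt (HX i.1) := i.2
  rw [mulVec_split]
  simp only [splitHX]
  rw [cut_sum]
  have e1 : (∑ p : Fin N, (if (r.val = 0 ∧ (p = q i ⟨0, by omega⟩ ∨ p = q i ⟨1, by omega⟩)) ∨
         (1 ≤ r.val ∧ r.val ≤ wt (HX i.1) - 4 ∧
           p = q i ⟨r.val + 1, by have := r.isLt; omega⟩) ∨
         (r.val = wt (HX i.1) - 3 ∧
           (p = q i ⟨wt (HX i.1) - 2, by omega⟩ ∨ p = q i ⟨wt (HX i.1) - 1, by omega⟩))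
      then (1 : ZMod 2) else 0) * x (Sum.inl p))
      = ∑ p : Fin N, (if p = q i ⟨r.val + 1, by have := r.isLt; omega⟩
          then x (Sum.inl p) else 0) := by
    refine Finset.sum_congr rfl fun p _ => ?_
    by_cases h : p = q i ⟨r.val + 1, by have := r.isLt; omega⟩
    · rw [if_pos (Or.inr (Or.inl ⟨h1, h2, h⟩)), if_pos h, one_mul]
    · rw [if_neg ?_, if_neg h, zero_mul]
      rintro (⟨h', _⟩ | ⟨_, _, hp⟩ | ⟨h', _⟩)
      · omega
      · exact h hp
      · omega
  rw [e1, Finset.sum_ite_eq' Finset.univ, if_pos (Finset.mem_univ _)]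
  have e2 : (∑ c : Fin (wt (HX i.1) - 3),
        (if c.val = r.val ∨ c.val + 1 = r.val then x (Sum.inr ⟨i, c⟩) else 0))
      = x (Sum.inr ⟨i, ⟨r.val, by omega⟩⟩) + x (Sum.inr ⟨i, ⟨r.val - 1, by omega⟩⟩) := by
    rw [← sum_ite_val_or r.val (r.val - 1) (by omega) (by omega) (by omega)
      (fun c => x (Sum.inr ⟨i, c⟩))]
    exact Finset.sum_congr rfl fun c _ => by
      by_cases h : c.val = r.val ∨ c.val = r.val - 1
      · rw [if_pos (by omega), if_pos h]
      · rw [if_neg (by omega), if_neg h]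
  rw [e2]
  ring

lemma row_last (hinj : ∀ i, Function.Injective (q i)) (x : SplitQ HX → ZMod 2)
    (i : {i : Fin nX // 4 ≤ wt (HX i)}) (r : Fin (wt (HX i.1) - 2))
    (h3 : r.val = wt (HX i.1) - 3) :
    (splitHX HX q).mulVec x (Sum.inr ⟨i, r⟩)
      = x (Sum.inl (q i ⟨wt (HX i.1) - 2, by have := i.2; omega⟩))
        + x (Sum.inl (q i ⟨wt (HX i.1) - 1, by have := i.2; omega⟩))
        + x (Sum.inr ⟨i, ⟨wt (HX i.1) - 4, by have := i.2; omega⟩⟩) := by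
  have hw : 4 ≤ wt (HX i.1) := i.2
  rw [mulVec_split]
  simp only [splitHX]
  rw [cut_sum]
  have e1 : (∑ p : Fin N, (if (r.val = 0 ∧ (p = q i ⟨0, by omega⟩ ∨ p = q i ⟨1, by omega⟩)) ∨
         (1 ≤ r.val ∧ r.val ≤ wt (HX i.1) - 4 ∧
           p = q i ⟨r.val + 1, by have := r.isLt; omega⟩) ∨
         (r.val = wt (HX i.1) - 3 ∧
           (p = q i ⟨wt (HX i.1) - 2, by omega⟩ ∨ p = q i ⟨wt (HX i.1) - 1, by omega⟩))
      then (1 : ZMod 2) else 0) * x (Sum.inl p))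
      = ∑ p : Fin N, (if p = q i ⟨wt (HX i.1) - 2, by omega⟩ ∨ p = q i ⟨wt (HX i.1) - 1, by omega⟩
          then x (Sum.inl p) else 0) := by
    refine Finset.sum_congr rfl fun p _ => ?_
    by_cases h : p = q i ⟨wt (HX i.1) - 2, by omega⟩ ∨ p = q i ⟨wt (HX i.1) - 1, by omega⟩
    · rw [if_pos (Or.inr (Or.inr ⟨h3, h⟩)), if_pos h, one_mul]
    · rw [if_neg ?_, if_neg h, zero_mul]
      rintro (⟨h', _⟩ | ⟨_, h', _⟩ | ⟨_, hp⟩)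
      · omega
      · omega
      · exact h hp
  rw [e1, sum_ite_eq_or (fun h => by
        have := hinj i h; rw [Fin.ext_iff] at this; simp at this; omega)]
  have e2 : (∑ c : Fin (wt (HX i.1) - 3),
        (if c.val = r.val ∨ c.val + 1 = r.val then x (Sum.inr ⟨i, c⟩) else 0))
      = x (Sum.inr ⟨i, ⟨wt (HX i.1) - 4, by omega⟩⟩) := by
    rw [← sum_ite_val_eq (wt (HX i.1) - 4) (show wt (HX i.1) - 4 < wt (HX i.1) - 3 by omega)
      (fun c => x (Sum.inr ⟨i, c⟩))]
    exact Finset.sum_congr rfl fun c _ => by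
      have := c.isLt
      by_cases h : c.val = wt (HX i.1) - 4
      · rw [if_pos (by omega), if_pos h]
      · rw [if_neg (by omega), if_neg h]
  rw [e2]

def liftv (u : Fin N → ZMod 2) : SplitQ HX → ZMod 2
  | Sum.inl p => u p
  | Sum.inr ⟨i, m⟩ => pref (fun a => u (q i a)) (m.val + 1)

set_option maxHeartbeats 2000000

lemma cut_val (hinj : ∀ i, Function.Injective (q i)) (x : SplitQ HX → ZMod 2)
    (i : {i : Fin nX // 4 ≤ wt (HX i)}) :
    ∀ (m : ℕ) (hm : m < wt (HX i.1) - 3),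
    x (Sum.inr ⟨i, ⟨m, hm⟩⟩)
      = pref (fun r => (splitHX HX q).mulVec x (Sum.inr ⟨i, r⟩)) m
        + pref (fun a => x (Sum.inl (q i a))) (m + 1) := by
  have hw : 4 ≤ wt (HX i.1) := i.2
  intro m
  induction m with
  | zero =>
    intro hm
    rw [pref_zero _ (by omega), pref_succ _ 0 (by omega), pref_zero _ (by omega),
      row_first HX q hinj x i ⟨0, by omega⟩ rfl]
    exact (by decide : ∀ a b c : ZMod 2, c = (a + b + c) + (a + b)) _ _ _
  | succ m ih =>
    intro hm
    have ihm := ih (by omega)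
    rw [pref_succ _ m (by omega), pref_succ _ (m + 1) (by omega),
      row_mid HX q x i ⟨m + 1, by omega⟩
        (show (1:ℕ) ≤ m + 1 by omega) (show m + 1 ≤ wt (HX i.1) - 4 by omega)]
    have e0 : x (Sum.inr ⟨i, ⟨m + 1 - 1, by omega⟩⟩) = x (Sum.inr ⟨i, ⟨m, by omega⟩⟩) :=
      fin_val_congr (fun c : Fin (wt (HX i.1) - 3) => x (Sum.inr ⟨i, c⟩)) _ _ (by omega)
    rw [e0, ihm]
    exact (by decide : ∀ A B X c : ZMod 2,
      c = (A + (X + (A + B) + c)) + (B + X)) _ _ _ _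

lemma block_total (hinj : ∀ i, Function.Injective (q i)) (x : SplitQ HX → ZMod 2)
    (i : {i : Fin nX // 4 ≤ wt (HX i)}) :
    (∑ r : Fin (wt (HX i.1) - 2), (splitHX HX q).mulVec x (Sum.inr ⟨i, r⟩))
      = ∑ a : Fin (wt (HX i.1)), x (Sum.inl (q i a)) := by
  have hw : 4 ≤ wt (HX i.1) := i.2
  have hcut := cut_val HX q hinj x i (wt (HX i.1) - 4) (by omega)
  have hlast := row_last HX q hinj x i ⟨wt (HX i.1) - 4 + 1, by omega⟩
    (show wt (HX i.1) - 4 + 1 = wt (HX i.1) - 3 by omega)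
  have e2 : x (Sum.inl (q i ⟨wt (HX i.1) - 4 + 1 + 1, by omega⟩))
      = x (Sum.inl (q i ⟨wt (HX i.1) - 2, by omega⟩)) :=
    fin_val_congr (fun a : Fin (wt (HX i.1)) => x (Sum.inl (q i a))) _ _ (by omega)
  have e3 : x (Sum.inl (q i ⟨wt (HX i.1) - 4 + 2 + 1, by omega⟩))
      = x (Sum.inl (q i ⟨wt (HX i.1) - 1, by omega⟩)) :=
    fin_val_congr (fun a : Fin (wt (HX i.1)) => x (Sum.inl (q i a))) _ _ (by omega)
  rw [← pref_top (fun r => (splitHX HX q).mulVec x (Sum.inr ⟨i, r⟩)) (wt (HX i.1) - 4 + 1)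
      (by omega),
    ← pref_top (fun a => x (Sum.inl (q i a))) (wt (HX i.1) - 4 + 2 + 1) (by omega),
    pref_succ _ (wt (HX i.1) - 4) (by omega),
    pref_succ _ (wt (HX i.1) - 4 + 2) (by omega),
    pref_succ _ (wt (HX i.1) - 4 + 1) (by omega),
    hlast, hcut, e2, e3]
  exact (by decide : ∀ A B X Y : ZMod 2,
    A + (X + Y + (A + B)) = B + X + Y) _ _ _ _

lemma row_sum_eq (hinj : ∀ i, Function.Injective (q i))
    (hrange : ∀ i p, HX i.1 p ≠ 0 ↔ p ∈ Set.range (q i))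
    (i : {i : Fin nX // 4 ≤ wt (HX i)}) (y : Fin N → ZMod 2) :
    ∑ a : Fin (wt (HX i.1)), y (q i a) = HX.mulVec y i.1 := by
  rw [Matrix.mulVec, dotProduct]
  have e1 : ∀ p, HX i.1 p * y p = if HX i.1 p ≠ 0 then y p else 0 := by
    intro p
    by_cases h : HX i.1 p = 0
    · simp [h]
    · rw [if_pos h, (by decide : ∀ z : ZMod 2, z ≠ 0 → z = 1) _ h, one_mul]
  rw [Finset.sum_congr rfl fun p _ => e1 p, ← Finset.sum_filter]
  refine Finset.sum_bij (fun a _ => q i a) ?_ ?_ ?_ ?_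
  · exact fun a _ => Finset.mem_filter.2 ⟨Finset.mem_univ _, (hrange i (q i a)).2 ⟨a, rfl⟩⟩
  · exact fun a₁ _ a₂ _ h => hinj i h
  · intro p hp
    obtain ⟨a, ha⟩ := (hrange i p).1 (Finset.mem_filter.1 hp).2
    exact ⟨a, Finset.mem_univ a, ha⟩
  · exact fun a _ => rfl

lemma lift_ker (hinj : ∀ i, Function.Injective (q i))
    (hrange : ∀ i p, HX i.1 p ≠ 0 ↔ p ∈ Set.range (q i))
    (u : Fin N → ZMod 2) (hu : HX.mulVec u = 0) :
    (splitHX HX q).mulVec (liftv HX q u) = 0 := by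
  funext j
  rw [Pi.zero_apply]
  match j with
  | Sum.inl i =>
    rw [mulVec_light]
    have : (fun p => liftv HX q u (Sum.inl p)) = u := rfl
    rw [this, hu, Pi.zero_apply]
  | Sum.inr ⟨i, r⟩ =>
    have hw : 4 ≤ wt (HX i.1) := i.2
    have hrv := r.isLt
    rcases (show r.val = 0 ∨ (1 ≤ r.val ∧ r.val ≤ wt (HX i.1) - 4) ∨ r.val = wt (HX i.1) - 3
      by omega) with h0 | ⟨h1, h2⟩ | h3
    · rw [row_first HX q hinj _ i r h0]
      have e : liftv HX q u (Sum.inr ⟨i, ⟨0, by omega⟩⟩)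
          = pref (fun a => u (q i a)) (0 + 1) := rfl
      rw [e, pref_succ _ 0 (by omega), pref_zero _ (by omega)]
      exact (by decide : ∀ a b : ZMod 2, a + b + (a + b) = 0) _ _
    · rw [row_mid HX q _ i r h1 h2]
      have e : liftv HX q u (Sum.inr ⟨i, ⟨r.val - 1, by omega⟩⟩)
          = pref (fun a => u (q i a)) (r.val - 1 + 1) := rfl
      have e' : liftv HX q u (Sum.inr ⟨i, ⟨r.val, by omega⟩⟩)
          = pref (fun a => u (q i a)) (r.val + 1) := rfl
      rw [e, e', show r.val - 1 + 1 = r.val by omega, pref_succ _ r.val (by omega)]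
      exact (by decide : ∀ x p : ZMod 2, x + p + (p + x) = 0) _ _
    · rw [row_last HX q hinj _ i r h3]
      have e : liftv HX q u (Sum.inr ⟨i, ⟨wt (HX i.1) - 4, by omega⟩⟩)
          = pref (fun a => u (q i a)) (wt (HX i.1) - 4 + 1) := rfl
      have htot : pref (fun a => u (q i a)) (wt (HX i.1) - 4 + 1 + 1 + 1)
          = ∑ a, u (q i a) := pref_top _ _ (by omega)
      have hz : (∑ a, u (q i a)) = 0 := by
        rw [row_sum_eq HX q hinj hrange i u, hu, Pi.zero_apply]
      have e2 : u (q i ⟨wt (HX i.1) - 4 + 1 + 1, by omega⟩)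
          = u (q i ⟨wt (HX i.1) - 2, by omega⟩) :=
        fin_val_congr (fun a : Fin (wt (HX i.1)) => u (q i a)) _ _ (by omega)
      have e3 : u (q i ⟨wt (HX i.1) - 4 + 1 + 1 + 1, by omega⟩)
          = u (q i ⟨wt (HX i.1) - 1, by omega⟩) :=
        fin_val_congr (fun a : Fin (wt (HX i.1)) => u (q i a)) _ _ (by omega)
      rw [pref_succ _ (wt (HX i.1) - 4 + 1 + 1) (by omega),
        pref_succ _ (wt (HX i.1) - 4 + 1) (by omega), e2, e3] at htot
      rw [e]
      rw [hz] at htot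
      exact (by decide : ∀ P X Y : ZMod 2, P + X + Y = 0 → X + Y + P = 0) _ _ _ htot

lemma wt_eq_zero_iff {α : Type*} [Fintype α] {x : α → ZMod 2} :
    wt x = 0 ↔ ∀ j, x j = 0 := by
  constructor
  · intro h j
    by_contra hj
    exact absurd h (by have := one_le_wt hj; omega)
  · exact wt_eq_zero

lemma synd_le (hinj : ∀ i, Function.Injective (q i))
    (hrange : ∀ i p, HX i.1 p ≠ 0 ↔ p ∈ Set.range (q i)) (x : SplitQ HX → ZMod 2) :
    wt (HX.mulVec (fun p => x (Sum.inl p))) ≤ wt ((splitHX HX q).mulVec x) := by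
  classical
  rw [wt, wt]
  refine Finset.card_le_card_of_injOn (fun i =>
    if h : 4 ≤ wt (HX i) then
      Sum.inr ⟨⟨i, h⟩, if hr : ∃ r, (splitHX HX q).mulVec x (Sum.inr ⟨⟨i, h⟩, r⟩) ≠ 0
        then hr.choose else ⟨0, by show 0 < wt (HX i) - 2; omega⟩⟩
    else Sum.inl ⟨i, h⟩) ?_ ?_
  · intro i hi
    rw [Finset.mem_coe] at hi ⊢
    rw [Finset.mem_filter] at hi ⊢
    refine ⟨Finset.mem_univ _, ?_⟩
    by_cases h : 4 ≤ wt (HX i)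
    · have hex : ∃ r, (splitHX HX q).mulVec x (Sum.inr ⟨⟨i, h⟩, r⟩) ≠ 0 := by
        by_contra hc
        push_neg at hc
        have hbt := block_total HX q hinj x ⟨i, h⟩
        rw [Finset.sum_congr rfl (fun r _ => hc r), Finset.sum_const, smul_zero] at hbt
        rw [row_sum_eq HX q hinj hrange ⟨i, h⟩ (fun p => x (Sum.inl p))] at hbt
        exact hi.2 hbt.symm
      beta_reduce
      rw [dif_pos h, dif_pos hex]
      exact hex.choose_spec
    · beta_reduce
      rw [dif_neg h]
      rw [show (splitHX HX q).mulVec x (Sum.inl ⟨i, h⟩)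
          = HX.mulVec (fun p => x (Sum.inl p)) i from mulVec_light HX q x ⟨i, h⟩]
      exact hi.2
  · intro i1 _ i2 _ heq
    by_cases h1 : 4 ≤ wt (HX i1) <;> by_cases h2 : 4 ≤ wt (HX i2) <;>
      simp only [dif_pos, dif_neg, h1, h2] at heq <;> first
      | (have := congrArg (fun z => match z with
          | Sum.inl a => a.1
          | Sum.inr b => b.1.1) heq
         exact this)
      | exact absurd heq (by simp)

lemma count_bound (hinj : ∀ i, Function.Injective (q i))
    (hrange : ∀ i p, HX i.1 p ≠ 0 ↔ p ∈ Set.range (q i)) (x : SplitQ HX → ZMod 2) :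
    (∑ i : {i : Fin nX // 4 ≤ wt (HX i)},
        wt (fun c : Fin (wt (HX i.1) - 3) => x (Sum.inr ⟨i, c⟩)))
      ≤ maxRowW HX * wt ((splitHX HX q).mulVec x)
        + maxRowW HX * (maxColW HX * wt (fun p => x (Sum.inl p))) := by
  classical
  set σ := (splitHX HX q).mulVec x with hσdef
  have hσ : ∀ j, σ j = (splitHX HX q).mulVec x j := fun _ => rfl
  set cw : {i : Fin nX // 4 ≤ wt (HX i)} → ℕ :=
    fun i => wt (fun c : Fin (wt (HX i.1) - 3) => x (Sum.inr ⟨i, c⟩)) with hcw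
  set I : Finset {i : Fin nX // 4 ≤ wt (HX i)} := Finset.univ.filter (fun i => cw i ≠ 0) with hI
  set Bs : Finset {i : Fin nX // 4 ≤ wt (HX i)} := Finset.univ.filter
    (fun i => wt (fun r : Fin (wt (HX i.1) - 2) => σ (Sum.inr ⟨i, r⟩)) ≠ 0) with hBs
  set Bd : Finset {i : Fin nX // 4 ≤ wt (HX i)} := Finset.univ.filter
    (fun i => ∃ p, x (Sum.inl p) ≠ 0 ∧ HX i.1 p ≠ 0) with hBd
  have hWle : ∀ i : {i : Fin nX // 4 ≤ wt (HX i)}, cw i ≤ maxRowW HX := by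
    intro i
    calc cw i ≤ Fintype.card (Fin (wt (HX i.1) - 3)) := wt_le_card _
    _ ≤ wt (HX i.1) := by simp only [Fintype.card_fin]; omega
    _ ≤ maxRowW HX := by
      rw [maxRowW]
      exact Finset.le_sup (f := fun i : Fin nX => wt (HX i)) (Finset.mem_univ i.1)
  have hsub : I ⊆ Bs ∪ Bd := by
    intro i hi
    rw [hI, Finset.mem_filter] at hi
    rw [Finset.mem_union, hBs, hBd, Finset.mem_filter, Finset.mem_filter]
    by_cases hs : wt (fun r : Fin (wt (HX i.1) - 2) => σ (Sum.inr ⟨i, r⟩)) ≠ 0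
    · exact Or.inl ⟨Finset.mem_univ _, hs⟩
    · refine Or.inr ⟨Finset.mem_univ _, ?_⟩
      push_neg at hs
      have hallσ : ∀ r : Fin (wt (HX i.1) - 2), σ (Sum.inr ⟨i, r⟩) = 0 :=
        wt_eq_zero_iff.1 hs
      obtain ⟨m, hm⟩ : ∃ m : Fin (wt (HX i.1) - 3), x (Sum.inr ⟨i, m⟩) ≠ 0 := by
        by_contra hc
        push_neg at hc
        exact hi.2 (wt_eq_zero hc)
      have hallσ' : ∀ r : Fin (wt (HX i.1) - 2),
          (splitHX HX q).mulVec x (Sum.inr ⟨i, r⟩) = 0 := fun r => hallσ r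
      have hcv := cut_val HX q hinj x i m.val m.isLt
      have hz1 : pref (fun r : Fin (wt (HX i.1) - 2) =>
          (splitHX HX q).mulVec x (Sum.inr ⟨i, r⟩)) m.val = 0 := by
        rw [pref]
        exact Finset.sum_eq_zero fun r _ => by rw [hallσ' r, ite_self]
      rw [hz1, zero_add] at hcv
      have hm' : pref (fun a => x (Sum.inl (q i a))) (m.val + 1) ≠ 0 := by
        rw [← hcv]
        exact hm
      rw [pref] at hm'
      obtain ⟨a, -, ha0⟩ := Finset.exists_ne_zero_of_sum_ne_zero hm'
      have ha : (if a.val ≤ m.val + 1 then x (Sum.inl (q i a)) else 0) ≠ 0 := ha0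
      have hax : x (Sum.inl (q i a)) ≠ 0 := by
        by_cases h' : a.val ≤ m.val + 1
        · rwa [if_pos h'] at ha
        · rw [if_neg h'] at ha; exact absurd rfl ha
      exact ⟨q i a, hax, (hrange i (q i a)).2 ⟨a, rfl⟩⟩
  have hBsle : Bs.card ≤ wt σ := by
    have h1 : Bs.card ≤ ∑ i ∈ Bs, wt (fun r : Fin (wt (HX i.1) - 2) => σ (Sum.inr ⟨i, r⟩)) := by
      rw [Finset.card_eq_sum_ones]
      refine Finset.sum_le_sum fun i hi => ?_
      rw [hBs, Finset.mem_filter] at hi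
      omega
    have h2 : (∑ i ∈ Bs, wt (fun r : Fin (wt (HX i.1) - 2) => σ (Sum.inr ⟨i, r⟩)))
        ≤ ∑ i : {i : Fin nX // 4 ≤ wt (HX i)},
            wt (fun r : Fin (wt (HX i.1) - 2) => σ (Sum.inr ⟨i, r⟩)) :=
      Finset.sum_le_sum_of_subset (Finset.subset_univ _)
    have h3 : (∑ i : {i : Fin nX // 4 ≤ wt (HX i)},
        wt (fun r : Fin (wt (HX i.1) - 2) => σ (Sum.inr ⟨i, r⟩))) ≤ wt σ := by
      rw [wt_sumtype σ, ← wt_sigma (fun b => σ (Sum.inr b))]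
      omega
    omega
  have hBdle : Bd.card ≤ wt (fun p => x (Sum.inl p)) * maxColW HX := by
    have hsub2 : Bd ⊆ (Finset.univ.filter fun p => x (Sum.inl p) ≠ 0).biUnion
        (fun p => Finset.univ.filter fun i : {i : Fin nX // 4 ≤ wt (HX i)} => HX i.1 p ≠ 0) := by
      intro i hi
      rw [hBd, Finset.mem_filter] at hi
      obtain ⟨p, hp1, hp2⟩ := hi.2
      exact Finset.mem_biUnion.2 ⟨p, Finset.mem_filter.2 ⟨Finset.mem_univ _, hp1⟩,
        Finset.mem_filter.2 ⟨Finset.mem_univ _, hp2⟩⟩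
    calc Bd.card ≤ _ := Finset.card_le_card hsub2
    _ ≤ ∑ p ∈ Finset.univ.filter fun p => x (Sum.inl p) ≠ 0,
        (Finset.univ.filter fun i : {i : Fin nX // 4 ≤ wt (HX i)} => HX i.1 p ≠ 0).card :=
      Finset.card_biUnion_le
    _ ≤ ∑ _p ∈ Finset.univ.filter fun p => x (Sum.inl p) ≠ 0, maxColW HX := by
      refine Finset.sum_le_sum fun p _ => ?_
      calc (Finset.univ.filter fun i : {i : Fin nX // 4 ≤ wt (HX i)} => HX i.1 p ≠ 0).card
          ≤ (Finset.univ.filter fun i : Fin nX => HX i p ≠ 0).card := by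
            refine Finset.card_le_card_of_injOn Subtype.val ?_ ?_
            · intro i hi
              rw [Finset.mem_coe] at hi ⊢
              rw [Finset.mem_filter] at hi ⊢
              exact ⟨Finset.mem_univ _, hi.2⟩
            · exact Subtype.val_injective.injOn
      _ ≤ maxColW HX := by
        rw [maxColW]
        exact Finset.le_sup (f := fun j => wt fun i => HX i j) (Finset.mem_univ p)
    _ = wt (fun p => x (Sum.inl p)) * maxColW HX := by
      rw [Finset.sum_const, smul_eq_mul, wt]
  have h0 : (∑ i : {i : Fin nX // 4 ≤ wt (HX i)}, cw i) = ∑ i ∈ I, cw i := by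
    refine (Finset.sum_subset (Finset.subset_univ I) fun i _ hni => ?_).symm
    by_contra hc
    exact hni (Finset.mem_filter.2 ⟨Finset.mem_univ _, hc⟩)
  calc (∑ i : {i : Fin nX // 4 ≤ wt (HX i)}, cw i) = ∑ i ∈ I, cw i := h0
  _ ≤ ∑ _i ∈ I, maxRowW HX := Finset.sum_le_sum fun i _ => hWle i
  _ = I.card * maxRowW HX := by rw [Finset.sum_const, smul_eq_mul]
  _ ≤ (Bs.card + Bd.card) * maxRowW HX :=
    Nat.mul_le_mul_right _ (le_trans (Finset.card_le_card hsub) (Finset.card_union_le _ _))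
  _ ≤ (wt σ + wt (fun p => x (Sum.inl p)) * maxColW HX) * maxRowW HX :=
    Nat.mul_le_mul_right _ (by omega)
  _ = maxRowW HX * wt σ + maxRowW HX * (maxColW HX * wt (fun p => x (Sum.inl p))) := by ring

end rows

/-- If `C` is `ε`-Z-sound, then the code `C̃` obtained from `C` by the
full X-type generator splitting procedure is `ε′`-Z-sound with
`ε′ = ε/(1 + w_X·(ε + q_X))`. -/
theorem stmt17 (HX : Matrix (Fin nX) (Fin N) (ZMod 2)) (HZ : Matrix (Fin nZ) (Fin N) (ZMod 2))
    (hCSS : HX * HZ.transpose = 0)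
    (q : ∀ i : {i : Fin nX // 4 ≤ wt (HX i)}, Fin (wt (HX i.1)) → Fin N)
    (hinj : ∀ i, Function.Injective (q i))
    (hrange : ∀ i p, HX i.1 p ≠ 0 ↔ p ∈ Set.range (q i))
    (ε : ℝ) (hε : 0 < ε) (hsound : ZSound ε HX) :
    ZSound (ε / (1 + (maxRowW HX : ℝ) * (ε + (maxColW HX : ℝ)))) (splitHX HX q) := by
  intro v hv
  classical
  have hW0 : (0:ℝ) ≤ (maxRowW HX : ℝ) := Nat.cast_nonneg _
  have hQ0 : (0:ℝ) ≤ (maxColW HX : ℝ) := Nat.cast_nonneg _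
  have hD : (0:ℝ) < 1 + (maxRowW HX : ℝ) * (ε + (maxColW HX : ℝ)) := by positivity
  set vo : Fin N → ZMod 2 := fun p => v (Sum.inl p) with hvo
  obtain ⟨uo, huo, hA⟩ : ∃ uo, HX.mulVec uo = 0 ∧
      ε * (wt (vo + uo) : ℝ) ≤ (wt (HX.mulVec vo) : ℝ) := by
    by_cases hvz : HX.mulVec vo = 0
    · refine ⟨vo, hvz, ?_⟩
      have hz : vo + vo = 0 := by
        funext p
        exact (by decide : ∀ a : ZMod 2, a + a = 0) _
      rw [hz, hvz, wt_eq_zero (x := (0 : Fin N → ZMod 2)) (fun j => rfl)]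
      simp
    · exact hsound vo hvz
  have hker := lift_ker HX q hinj hrange uo huo
  refine ⟨liftv HX q uo, hker, ?_⟩
  set d : SplitQ HX → ZMod 2 := v + liftv HX q uo with hd
  have hdσ : (splitHX HX q).mulVec d = (splitHX HX q).mulVec v := by
    rw [hd, Matrix.mulVec_add, hker, add_zero]
  have hdinl : (fun p => d (Sum.inl p)) = vo + uo := rfl
  have hwt_d : wt d = wt (vo + uo) + ∑ i : {i : Fin nX // 4 ≤ wt (HX i)},
      wt (fun c : Fin (wt (HX i.1) - 3) => d (Sum.inr ⟨i, c⟩)) := by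
    rw [wt_sumtype d, hdinl, wt_sigma (fun b => d (Sum.inr b))]
  have hC := count_bound HX q hinj hrange d
  rw [hdσ, hdinl] at hC
  have hT : wt (HX.mulVec vo) ≤ wt ((splitHX HX q).mulVec v) := by
    have h1 := synd_le HX q hinj hrange d
    rw [hdσ] at h1
    rw [show HX.mulVec (fun p => d (Sum.inl p)) = HX.mulVec vo by
      rw [hdinl, Matrix.mulVec_add, huo, add_zero]] at h1
    exact h1
  rw [hwt_d, div_mul_eq_mul_div, div_le_iff₀ hD, Nat.cast_add]
  have hTr : ((wt (HX.mulVec vo) : ℕ) : ℝ) ≤ (wt ((splitHX HX q).mulVec v) : ℝ) :=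
    Nat.cast_le.2 hT
  have f1 : ε * (wt (vo + uo) : ℝ) ≤ (wt ((splitHX HX q).mulVec v) : ℝ) := hA.trans hTr
  have hCr : ((∑ i : {i : Fin nX // 4 ≤ wt (HX i)},
        wt (fun c : Fin (wt (HX i.1) - 3) => d (Sum.inr ⟨i, c⟩)) : ℕ) : ℝ)
      ≤ (maxRowW HX : ℝ) * (wt ((splitHX HX q).mulVec v) : ℝ)
        + (maxRowW HX : ℝ) * ((maxColW HX : ℝ) * (wt (vo + uo) : ℝ)) := by
    exact_mod_cast hC
  have f2 := mul_le_mul_of_nonneg_left hCr hε.le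
  have f3 := mul_le_mul_of_nonneg_left f1 (mul_nonneg hW0 hQ0)
  linarith [f1, f2, f3]
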